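/- For a nonempty label 𝓜 the following are equivalent: (1) whenever m₁, m₂ ∈ 𝓜 have disjoint supports, m₁ + m₂ ∈ 𝓜; (2) 𝓜 is a sublattice: m₁, m₂ ∈ 𝓜 implies the pointwise maximum m₁ ∨ m₂ ∈ 𝓜; (3) 𝓜 = {m : m ≤ ρ} for some function ρ : ℕ → ℕ ∪ {∞}; (4) 𝓜 = {m : m ≤ ρ(𝓜)}, where ρ(𝓜) is the roof of 𝓜. -/

import Mathlib

/-- A label: a hereditary set of ℕ-vectors (finitely supported functions `ℕ → ℕ`). -/
def IsLabel (M : Set (ℕ →₀ ℕ)) : Prop :=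
  ∀ m₁ m : ℕ →₀ ℕ, m₁ ≤ m → m ∈ M → m₁ ∈ M

/-- The roof of a label: `ρ(𝓜)_ℓ = sup {m ℓ : m ∈ 𝓜}` in `ℕ ∪ {∞}`. -/
noncomputable def roof (M : Set (ℕ →₀ ℕ)) (ℓ : ℕ) : ℕ∞ :=
  ⨆ m ∈ M, (m ℓ : ℕ∞)

/-- For a nonempty label `𝓜`, the following are equivalent:
(1) sums of elements with disjoint supports stay in `𝓜`;
(2) `𝓜` is closed under pointwise maximum;
(3) `𝓜 = {m : m ≤ ρ}` for some `ρ : ℕ → ℕ∞`;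
(4) `𝓜 = {m : m ≤ ρ(𝓜)}` for the roof `ρ(𝓜)`. -/
theorem stmt9 (M : Set (ℕ →₀ ℕ)) (hM : IsLabel M) (hne : M.Nonempty) :
    ((∀ m₁ ∈ M, ∀ m₂ ∈ M, (∀ ℓ : ℕ, m₁ ℓ = 0 ∨ m₂ ℓ = 0) → m₁ + m₂ ∈ M) ↔
      (∀ m₁ ∈ M, ∀ m₂ ∈ M, ∃ m ∈ M, ∀ ℓ : ℕ, m ℓ = max (m₁ ℓ) (m₂ ℓ))) ∧
    ((∀ m₁ ∈ M, ∀ m₂ ∈ M, (∀ ℓ : ℕ, m₁ ℓ = 0 ∨ m₂ ℓ = 0) → m₁ + m₂ ∈ M) ↔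
      (∃ ρ : ℕ → ℕ∞, M = {m : ℕ →₀ ℕ | ∀ ℓ : ℕ, (m ℓ : ℕ∞) ≤ ρ ℓ})) ∧
    ((∀ m₁ ∈ M, ∀ m₂ ∈ M, (∀ ℓ : ℕ, m₁ ℓ = 0 ∨ m₂ ℓ = 0) → m₁ + m₂ ∈ M) ↔
      (M = {m : ℕ →₀ ℕ | ∀ ℓ : ℕ, (m ℓ : ℕ∞) ≤ roof M ℓ})) := by
  -- A → D
  have hAD : (∀ m₁ ∈ M, ∀ m₂ ∈ M, (∀ ℓ : ℕ, m₁ ℓ = 0 ∨ m₂ ℓ = 0) → m₁ + m₂ ∈ M) →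
      (M = {m : ℕ →₀ ℕ | ∀ ℓ : ℕ, (m ℓ : ℕ∞) ≤ roof M ℓ}) := by
    intro hA
    apply Set.Subset.antisymm
    · intro m hm ℓ
      exact le_iSup₂_of_le m hm le_rfl
    · intro m hm
      simp only [Set.mem_setOf_eq] at hm
      revert hm
      induction m using Finsupp.induction with
      | zero =>
        intro _
        obtain ⟨m0, hm0⟩ := hne
        exact hM 0 m0 (fun _ => Nat.zero_le _) hm0
      | single_add a b f haf hb ih =>
        intro hle
        have hfa : f a = 0 := Finsupp.notMem_support_iff.mp haf
        have hf : ∀ ℓ, ((f ℓ : ℕ∞)) ≤ roof M ℓ := by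
          intro ℓ
          refine le_trans ?_ (hle ℓ)
          simp only [Finsupp.add_apply]
          exact_mod_cast Nat.le_add_left _ _
        have hfM := ih hf
        -- find m' ∈ M with b ≤ m' a
        have hba : (b : ℕ∞) ≤ roof M a := by
          have := hle a
          simpa [Finsupp.add_apply, hfa] using this
        have hex : ∃ m' ∈ M, b ≤ m' a := by
          by_contra hc
          push_neg at hc
          have : roof M a ≤ ((b - 1 : ℕ) : ℕ∞) := by
            refine iSup₂_le fun m' hm' => ?_
            have := hc m' hm'
            exact_mod_cast Nat.le_sub_one_of_lt this
          have hb1 : (b : ℕ∞) ≤ ((b - 1 : ℕ) : ℕ∞) := le_trans hba this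
          have : b ≤ b - 1 := by exact_mod_cast hb1
          omega
        obtain ⟨m', hm'M, hm'⟩ := hex
        have hsingle : Finsupp.single a b ∈ M := by
          refine hM _ m' (fun ℓ => ?_) hm'M
          rcases eq_or_ne ℓ a with rfl | h
          · simpa using hm'
          · simp [Finsupp.single_apply, h.symm]
        have hdisj : ∀ ℓ : ℕ, (Finsupp.single a b) ℓ = 0 ∨ f ℓ = 0 := by
          intro ℓ
          rcases eq_or_ne ℓ a with rfl | h
          · exact Or.inr hfa
          · exact Or.inl (by simp [Finsupp.single_apply, h.symm])
        exact hA _ hsingle _ hfM hdisj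
  -- D → C
  have hDC : (M = {m : ℕ →₀ ℕ | ∀ ℓ : ℕ, (m ℓ : ℕ∞) ≤ roof M ℓ}) →
      (∃ ρ : ℕ → ℕ∞, M = {m : ℕ →₀ ℕ | ∀ ℓ : ℕ, (m ℓ : ℕ∞) ≤ ρ ℓ}) :=
    fun h => ⟨roof M, h⟩
  -- C → B
  have hCB : (∃ ρ : ℕ → ℕ∞, M = {m : ℕ →₀ ℕ | ∀ ℓ : ℕ, (m ℓ : ℕ∞) ≤ ρ ℓ}) →
      (∀ m₁ ∈ M, ∀ m₂ ∈ M, ∃ m ∈ M, ∀ ℓ : ℕ, m ℓ = max (m₁ ℓ) (m₂ ℓ)) := by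
    rintro ⟨ρ, rfl⟩ m₁ hm₁ m₂ hm₂
    refine ⟨m₁ ⊔ m₂, ?_, ?_⟩
    · intro ℓ
      have : ((m₁ ⊔ m₂) ℓ : ℕ) = max (m₁ ℓ) (m₂ ℓ) := by
        simp [Finsupp.sup_apply]
      rw [this]
      exact max_le (hm₁ ℓ) (hm₂ ℓ)
    · intro ℓ
      simp [Finsupp.sup_apply]
  -- B → A
  have hBA : (∀ m₁ ∈ M, ∀ m₂ ∈ M, ∃ m ∈ M, ∀ ℓ : ℕ, m ℓ = max (m₁ ℓ) (m₂ ℓ)) →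
      (∀ m₁ ∈ M, ∀ m₂ ∈ M, (∀ ℓ : ℕ, m₁ ℓ = 0 ∨ m₂ ℓ = 0) → m₁ + m₂ ∈ M) := by
    intro hB m₁ hm₁ m₂ hm₂ hdisj
    obtain ⟨m, hmM, hm⟩ := hB m₁ hm₁ m₂ hm₂
    have : m₁ + m₂ = m := by
      ext ℓ
      rw [Finsupp.add_apply, hm ℓ]
      rcases hdisj ℓ with h | h <;> simp [h]
    rwa [this]
  exact ⟨⟨fun hA => hCB (hDC (hAD hA)), hBA⟩,
    ⟨fun hA => hDC (hAD hA), fun hC => hBA (hCB hC)⟩,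
    ⟨hAD, fun hD => hBA (hCB (hDC hD))⟩⟩
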